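/- Let v(t) = max(|u₁(t)|, |u₂(t)|) where u is continuous of locally bounded variation with u(0) = 0 and satisfies (u₁+u₂) du₂ ≤ 0 and (u₁-u₂) du₁ ≤ 0. Then on the sector N = {u₂ > 0, -u₂ < u₁ ≤ u₂} one has v = u₂ and the restriction of dv = du₂ to {t : u(t) ∈ N} is a non-positive measure; analogous statements hold on the sectors E = {u₁ > 0, -u₁ < u₂ ≤ u₁} (v = u₁, dv = du₁ ≤ 0 there), S = {u₂ < 0, u₂ < u₁ ≤ -u₂} (v = -u₂, dv = -du₂ ≤ 0), and W = {u₁ < 0, u₁ < u₂ ≤ -u₁} (v = -u₁, dv = -du₁ ≤ 0). -/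

import Mathlib

open Set MeasureTheory

open Filter Function
open scoped ENNReal NNReal

noncomputable def sfAdd (F G : StieltjesFunction ℝ) : StieltjesFunction ℝ where
  toFun := fun x => F x + G x
  mono' := F.mono.add G.mono
  right_continuous' := fun x => (F.right_continuous x).add (G.right_continuous x)

lemma sfAdd_apply (F G : StieltjesFunction ℝ) (x : ℝ) : sfAdd F G x = F x + G x := rfl

lemma sfAdd_continuous {F G : StieltjesFunction ℝ} (hF : Continuous F) (hG : Continuous G) :
    Continuous (sfAdd F G) := hF.add hG

lemma sfAdd_measure (F G : StieltjesFunction ℝ) :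
    (sfAdd F G).measure = F.measure + G.measure := by
  refine Measure.ext_of_Ioc _ _ (fun a b hab => ?_)
  rw [StieltjesFunction.measure_Ioc, Measure.add_apply, StieltjesFunction.measure_Ioc,
    StieltjesFunction.measure_Ioc, sfAdd_apply, sfAdd_apply,
    ← ENNReal.ofReal_add (sub_nonneg.2 (F.mono hab.le)) (sub_nonneg.2 (G.mono hab.le))]
  ring_nf

lemma measure_Icc_cont (F : StieltjesFunction ℝ) (hF : Continuous F) (a b : ℝ) :
    F.measure (Icc a b) = ENNReal.ofReal (F b - F a) := by
  rw [F.measure_Icc]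
  congr 2
  exact leftLim_eq_of_tendsto
    ((hF.tendsto a).mono_left nhdsWithin_le_nhds)

lemma stieltjes_le_on_compact (F G : StieltjesFunction ℝ) (hF : Continuous F) (hG : Continuous G)
    (S : Set ℝ) (hSc : IsCompact S) (hFG : ∀ t ∈ S, F t = G t) :
    F.measure S ≤ G.measure S := by
  classical
  by_contra hlt
  push_neg at hlt
  obtain ⟨V, hSV, hVopen, hVlt⟩ := Set.exists_isOpen_lt_of_lt S _ hlt
  refine absurd hVlt (not_lt.2 ?_)
  -- show F.measure S ≤ G.measure V
  have hcover : S ⊆ ⋃ x ∈ S, connectedComponentIn V x :=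
    fun x hx => mem_biUnion hx (mem_connectedComponentIn (hSV hx))
  obtain ⟨T, hTS, hTfin, hTcov⟩ := hSc.elim_finite_subcover_image
    (fun x _ => hVopen.connectedComponentIn) hcover
  set I : Finset (Set ℝ) := hTfin.toFinset.image (fun x => connectedComponentIn V x) with hI
  -- basic facts about members of I
  have hcomp : ∀ C ∈ I, ∃ x : ℝ, x ∈ V ∧ C = connectedComponentIn V x := by
    intro C hC
    obtain ⟨x, hx, rfl⟩ := Finset.mem_image.1 hC
    exact ⟨x, hSV (hTS (hTfin.mem_toFinset.1 hx)), rfl⟩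
  have hne : ∀ C ∈ I, (S ∩ C).Nonempty := by
    intro C hC
    obtain ⟨x, hx, rfl⟩ := Finset.mem_image.1 hC
    have hxS : x ∈ S := hTS (hTfin.mem_toFinset.1 hx)
    exact ⟨x, hxS, mem_connectedComponentIn (hSV hxS)⟩
  -- closure points of components that lie in V belong to the component
  have hclos : ∀ (x : ℝ), x ∈ V → ∀ C ∈ I, x ∈ closure C → x ∈ C := by
    intro x hxV C hC hxc
    obtain ⟨y, hyV, rfl⟩ := hcomp C hC
    have hxo : IsOpen (connectedComponentIn V x) := hVopen.connectedComponentIn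
    have hnonempty : (connectedComponentIn V x ∩ connectedComponentIn V y).Nonempty := by
      have := mem_closure_iff.1 hxc _ hxo (mem_connectedComponentIn hxV)
      exact this.imp (fun z hz => ⟨hz.1, hz.2⟩)
    obtain ⟨z, hz1, hz2⟩ := hnonempty
    have h1 := connectedComponentIn_eq hz1
    have h2 := connectedComponentIn_eq hz2
    rw [h2, ← h1]
    exact mem_connectedComponentIn hxV
  -- inf and sup of S ∩ C
  set a : Set ℝ → ℝ := fun C => sInf (S ∩ C) with ha
  set b : Set ℝ → ℝ := fun C => sSup (S ∩ C) with hb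
  have hbddB : ∀ C : Set ℝ, BddBelow (S ∩ C) := fun C => hSc.bddBelow.mono inter_subset_left
  have hbddA : ∀ C : Set ℝ, BddAbove (S ∩ C) := fun C => hSc.bddAbove.mono inter_subset_left
  have haS : ∀ C ∈ I, a C ∈ S ∩ C := by
    intro C hC
    have h1 : a C ∈ closure (S ∩ C) := csInf_mem_closure (hne C hC) (hbddB C)
    have h2 : a C ∈ S := by
      have := closure_mono (inter_subset_left : S ∩ C ⊆ S) h1
      rwa [hSc.isClosed.closure_eq] at this
    exact ⟨h2, hclos _ (hSV h2) C hC (closure_mono inter_subset_right h1)⟩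
  have hbS : ∀ C ∈ I, b C ∈ S ∩ C := by
    intro C hC
    have h1 : b C ∈ closure (S ∩ C) := csSup_mem_closure (hne C hC) (hbddA C)
    have h2 : b C ∈ S := by
      have := closure_mono (inter_subset_left : S ∩ C ⊆ S) h1
      rwa [hSc.isClosed.closure_eq] at this
    exact ⟨h2, hclos _ (hSV h2) C hC (closure_mono inter_subset_right h1)⟩
  have hIccC : ∀ C ∈ I, Icc (a C) (b C) ⊆ C := by
    intro C hC
    obtain ⟨y, hyV, rfl⟩ := hcomp C hC
    exact (isPreconnected_connectedComponentIn).ordConnected.out (haS _ hC).2 (hbS _ hC).2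
  have hSCIcc : ∀ C : Set ℝ, S ∩ C ⊆ Icc (a C) (b C) := by
    intro C x hx
    exact ⟨csInf_le (hbddB C) hx, le_csSup (hbddA C) hx⟩
  -- chain of inequalities
  have step1 : F.measure S ≤ ∑ C ∈ I, F.measure (S ∩ C) := by
    have hsub : S ⊆ ⋃ C ∈ I, (S ∩ C) := by
      intro x hx
      obtain ⟨i, hit, hxi⟩ := by
        have := hTcov hx
        simpa using this
      exact mem_biUnion (Finset.mem_image_of_mem _ (hTfin.mem_toFinset.2 hit)) ⟨hx, hxi⟩
    exact (measure_mono hsub).trans (measure_biUnion_finset_le I _)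
  have step2 : ∀ C ∈ I, F.measure (S ∩ C) ≤ G.measure (Icc (a C) (b C)) := by
    intro C hC
    calc F.measure (S ∩ C) ≤ F.measure (Icc (a C) (b C)) := measure_mono (hSCIcc C)
      _ = ENNReal.ofReal (F (b C) - F (a C)) := measure_Icc_cont F hF _ _
      _ = ENNReal.ofReal (G (b C) - G (a C)) := by
          rw [hFG _ (haS C hC).1, hFG _ (hbS C hC).1]
      _ = G.measure (Icc (a C) (b C)) := (measure_Icc_cont G hG _ _).symm
  have hdisj : (↑I : Set (Set ℝ)).PairwiseDisjoint (fun C => Icc (a C) (b C)) := by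
    intro C hC C' hC' hne'
    have hCC' : Disjoint C C' := by
      obtain ⟨x, hxV, rfl⟩ := hcomp C hC
      obtain ⟨y, hyV, rfl⟩ := hcomp C' hC'
      rw [Set.disjoint_iff_inter_eq_empty]
      by_contra hne''
      obtain ⟨z, hz1, hz2⟩ := nonempty_iff_ne_empty.2 hne''
      exact hne' ((connectedComponentIn_eq hz1).trans (connectedComponentIn_eq hz2).symm)
    exact hCC'.mono (hIccC C hC) (hIccC C' hC')
  have step3 : ∑ C ∈ I, G.measure (Icc (a C) (b C)) ≤ G.measure V := by
    rw [← measure_biUnion_finset hdisj (fun C _ => measurableSet_Icc)]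
    refine measure_mono ?_
    refine iUnion₂_subset fun C hC => ?_
    exact (hIccC C hC).trans (by
      obtain ⟨x, hxV, rfl⟩ := hcomp C hC
      exact connectedComponentIn_subset V x)
  calc F.measure S ≤ ∑ C ∈ I, F.measure (S ∩ C) := step1
    _ ≤ ∑ C ∈ I, G.measure (Icc (a C) (b C)) := Finset.sum_le_sum step2
    _ ≤ G.measure V := step3

lemma stieltjes_eq_on_compact (F G : StieltjesFunction ℝ) (hF : Continuous F) (hG : Continuous G)
    (S : Set ℝ) (hSc : IsCompact S) (hFG : ∀ t ∈ S, F t = G t) :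
    F.measure S = G.measure S :=
  le_antisymm (stieltjes_le_on_compact F G hF hG S hSc hFG)
    (stieltjes_le_on_compact G F hG hF S hSc (fun t ht => (hFG t ht).symm))

lemma layer_le (μ ν : Measure ℝ) [IsLocallyFiniteMeasure μ] [IsLocallyFiniteMeasure ν]
    (f : ℝ → ℝ) (hf : Continuous f) (B : Set ℝ) (hB : MeasurableSet B)
    (hpos : ∀ t ∈ B, 0 < f t)
    (h : ∀ C : Set ℝ, MeasurableSet C → C ⊆ B → (∫ t in C, f t ∂μ) ≤ ∫ t in C, f t ∂ν) :
    μ B ≤ ν B := by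
  have hfm : Measurable f := hf.measurable
  set g : ℝ → ℝ≥0∞ := fun t => ENNReal.ofReal (f t) with hg
  have hgm : Measurable g := ENNReal.measurable_ofReal.comp hfm
  have key : ∀ n : ℕ, μ (B ∩ Icc (-(n : ℝ)) n) ≤ ν (B ∩ Icc (-(n : ℝ)) n) := by
    intro n
    set A := B ∩ Icc (-(n : ℝ)) n with hA
    have hAm : MeasurableSet A := hB.inter measurableSet_Icc
    have hAB : A ⊆ B := inter_subset_left
    -- withDensity comparison on subsets of A
    have hwd : ∀ C : Set ℝ, MeasurableSet C → C ⊆ A →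
        μ.withDensity g C ≤ ν.withDensity g C := by
      intro C hCm hCA
      rw [withDensity_apply _ hCm, withDensity_apply _ hCm]
      have hint1 : IntegrableOn f C μ :=
        (hf.integrableOn_Icc).mono_set (hCA.trans inter_subset_right)
      have hint2 : IntegrableOn f C ν :=
        (hf.integrableOn_Icc).mono_set (hCA.trans inter_subset_right)
      have hnn1 : 0 ≤ᵐ[μ.restrict C] f :=
        ae_restrict_of_forall_mem hCm (fun t ht => (hpos t (hAB (hCA ht))).le)
      have hnn2 : 0 ≤ᵐ[ν.restrict C] f :=
        ae_restrict_of_forall_mem hCm (fun t ht => (hpos t (hAB (hCA ht))).le)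
      rw [← ofReal_integral_eq_lintegral_ofReal hint1 hnn1,
        ← ofReal_integral_eq_lintegral_ofReal hint2 hnn2]
      exact ENNReal.ofReal_le_ofReal (h C hCm (hCA.trans hAB))
    have hres : (μ.restrict A).withDensity g ≤ (ν.restrict A).withDensity g := by
      refine Measure.le_iff.2 (fun s hs => ?_)
      rw [← restrict_withDensity hAm, ← restrict_withDensity hAm,
        Measure.restrict_apply hs, Measure.restrict_apply hs]
      exact hwd _ (hs.inter hAm) inter_subset_right
    have hid : ∀ κ : Measure ℝ, κ A ≠ ⊤ →
        ∫⁻ t, (g t)⁻¹ ∂((κ.restrict A).withDensity g) = κ A := by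
      intro κ _
      rw [lintegral_withDensity_eq_lintegral_mul _ hgm (g := fun t => (g t)⁻¹) (Measurable.inv hgm)]
      calc ∫⁻ x, (g * fun t => (g t)⁻¹) x ∂(κ.restrict A)
          = ∫⁻ x in A, (g * fun t => (g t)⁻¹) x ∂κ := rfl
        _ = ∫⁻ _ in A, 1 ∂κ := by
            refine setLIntegral_congr_fun hAm (fun x hx => ?_)
            have hx0 : g x ≠ 0 := by
              simp only [hg, ne_eq, ENNReal.ofReal_eq_zero, not_le]
              exact hpos x (hAB hx)
            simp [ENNReal.mul_inv_cancel hx0 ENNReal.ofReal_ne_top]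
        _ = κ A := by rw [setLIntegral_one]
    have hμA : μ A ≠ ⊤ :=
      ((measure_mono (inter_subset_right : A ⊆ _)).trans_lt
        (isCompact_Icc.measure_lt_top)).ne
    have hνA : ν A ≠ ⊤ :=
      ((measure_mono (inter_subset_right : A ⊆ _)).trans_lt
        (isCompact_Icc.measure_lt_top)).ne
    calc μ A = ∫⁻ t, (g t)⁻¹ ∂((μ.restrict A).withDensity g) := (hid μ hμA).symm
      _ ≤ ∫⁻ t, (g t)⁻¹ ∂((ν.restrict A).withDensity g) := lintegral_mono' hres le_rfl
      _ = ν A := hid ν hνA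
  have hBU : B = ⋃ n : ℕ, B ∩ Icc (-(n : ℝ)) n := by
    ext x
    simp only [mem_iUnion, mem_inter_iff, mem_Icc]
    constructor
    · intro hx
      obtain ⟨n, hn⟩ := exists_nat_ge |x|
      exact ⟨n, hx, by constructor <;> [linarith [abs_le.1 hn |>.1]; linarith [abs_le.1 hn |>.2]]⟩
    · rintro ⟨n, hx, -⟩; exact hx
  have hdir : Directed (· ⊆ ·) (fun n : ℕ => B ∩ Icc (-(n : ℝ)) n) := by
    intro n m
    exact ⟨max n m,
      inter_subset_inter_right _ (Icc_subset_Icc (neg_le_neg (Nat.cast_le.2 (le_max_left n m)))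
        (Nat.cast_le.2 (le_max_left n m))),
      inter_subset_inter_right _ (Icc_subset_Icc (neg_le_neg (Nat.cast_le.2 (le_max_right n m)))
        (Nat.cast_le.2 (le_max_right n m)))⟩
  have hμU : μ B = ⨆ n : ℕ, μ (B ∩ Icc (-(n : ℝ)) n) := by
    conv_lhs => rw [hBU]
    exact hdir.measure_iUnion
  rw [hμU]
  exact iSup_le fun n => (key n).trans (measure_mono inter_subset_left)

theorem sector_analysis
    (u : ℝ → Fin 2 → ℝ) (v : ℝ → ℝ) (m mbar : Fin 2 → StieltjesFunction ℝ)
    (hmc : ∀ j, Continuous (m j)) (hmbarc : ∀ j, Continuous (mbar j))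
    (hdecomp : ∀ t, ∀ j, u t j = m j t - mbar j t)
    (hu0 : u 0 = 0)
    (hv : ∀ t, v t = max |u t 0| |u t 1|)
    (h2 : ∀ B : Set ℝ, MeasurableSet B → B ⊆ Set.Ici 0 →
      (∫ t in B, (u t 0 + u t 1) ∂(m 1).measure)
        ≤ ∫ t in B, (u t 0 + u t 1) ∂(mbar 1).measure)
    (h1 : ∀ B : Set ℝ, MeasurableSet B → B ⊆ Set.Ici 0 →
      (∫ t in B, (u t 0 - u t 1) ∂(m 0).measure)
        ≤ ∫ t in B, (u t 0 - u t 1) ∂(mbar 0).measure) :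
    -- North sector: v = u₂ and dv = du₂ ≤ 0 there
    ((∀ t ∈ Set.Ici (0:ℝ),
        (0 < u t 1 ∧ -u t 1 < u t 0 ∧ u t 0 ≤ u t 1) → v t = u t 1)
      ∧ ∀ B : Set ℝ, MeasurableSet B →
          B ⊆ {t ∈ Set.Ici (0:ℝ) | 0 < u t 1 ∧ -u t 1 < u t 0 ∧ u t 0 ≤ u t 1} →
          (m 1).measure B ≤ (mbar 1).measure B)
    -- East sector: v = u₁ and dv = du₁ ≤ 0 there
    ∧ ((∀ t ∈ Set.Ici (0:ℝ),
        (0 < u t 0 ∧ -u t 0 < u t 1 ∧ u t 1 ≤ u t 0) → v t = u t 0)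
      ∧ ∀ B : Set ℝ, MeasurableSet B →
          B ⊆ {t ∈ Set.Ici (0:ℝ) | 0 < u t 0 ∧ -u t 0 < u t 1 ∧ u t 1 ≤ u t 0} →
          (m 0).measure B ≤ (mbar 0).measure B)
    -- South sector: v = -u₂ and dv = -du₂ ≤ 0 there
    ∧ ((∀ t ∈ Set.Ici (0:ℝ),
        (u t 1 < 0 ∧ u t 1 < u t 0 ∧ u t 0 ≤ -u t 1) → v t = -u t 1)
      ∧ ∀ B : Set ℝ, MeasurableSet B →
          B ⊆ {t ∈ Set.Ici (0:ℝ) | u t 1 < 0 ∧ u t 1 < u t 0 ∧ u t 0 ≤ -u t 1} →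
          (mbar 1).measure B ≤ (m 1).measure B)
    -- West sector: v = -u₁ and dv = -du₁ ≤ 0 there
    ∧ ((∀ t ∈ Set.Ici (0:ℝ),
        (u t 0 < 0 ∧ u t 0 < u t 1 ∧ u t 1 ≤ -u t 0) → v t = -u t 0)
      ∧ ∀ B : Set ℝ, MeasurableSet B →
          B ⊆ {t ∈ Set.Ici (0:ℝ) | u t 0 < 0 ∧ u t 0 < u t 1 ∧ u t 1 ≤ -u t 0} →
          (mbar 0).measure B ≤ (m 0).measure B) := by
  classical
  have hu0c : Continuous (fun t => u t 0) := by
    have : (fun t => u t 0) = fun t => m 0 t - mbar 0 t := funext fun t => hdecomp t 0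
    rw [this]; exact (hmc 0).sub (hmbarc 0)
  have hu1c : Continuous (fun t => u t 1) := by
    have : (fun t => u t 1) = fun t => m 1 t - mbar 1 t := funext fun t => hdecomp t 1
    rw [this]; exact (hmc 1).sub (hmbarc 1)
  -- North measure inequality (also used for East diagonal)
  have north : ∀ B : Set ℝ, MeasurableSet B →
      B ⊆ {t ∈ Set.Ici (0:ℝ) | 0 < u t 1 ∧ -u t 1 < u t 0 ∧ u t 0 ≤ u t 1} →
      (m 1).measure B ≤ (mbar 1).measure B := by
    intro B hBm hBsub
    refine layer_le _ _ (fun t => u t 0 + u t 1) (hu0c.add hu1c) B hBm (fun t ht => ?_)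
      (fun C hCm hCB => h2 C hCm (fun t ht => (hBsub (hCB ht)).1))
    obtain ⟨-, -, hb, -⟩ := hBsub ht
    show (0:ℝ) < u t 0 + u t 1
    linarith
  refine ⟨⟨?_, north⟩, ⟨?_, ?_⟩, ⟨?_, ?_⟩, ⟨?_, ?_⟩⟩
  -- North pointwise
  · rintro t ht ⟨ha, hb, hc⟩
    have habs : |u t 0| ≤ u t 1 := abs_le.2 ⟨by linarith, hc⟩
    rw [hv t, abs_of_pos ha, max_eq_right habs]
  -- East pointwise
  · rintro t ht ⟨ha, hb, hc⟩
    have habs : |u t 1| ≤ u t 0 := abs_le.2 ⟨by linarith, hc⟩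
    rw [hv t, abs_of_pos ha, max_eq_left habs]
  -- East measure
  · intro B hBm hBsub
    set D : Set ℝ := {t | u t 0 = u t 1} with hD
    have hDm : MeasurableSet D := measurableSet_eq_fun hu0c.measurable hu1c.measurable
    have hBeq : (B \ D) ∪ (B ∩ D) = B := diff_union_inter B D
    have hdisj : Disjoint (B \ D) (B ∩ D) :=
      disjoint_sdiff_self_left.mono_right inter_subset_right
    have hplus : (m 0).measure (B \ D) ≤ (mbar 0).measure (B \ D) := by
      refine layer_le _ _ (fun t => u t 0 - u t 1) (hu0c.sub hu1c) _ (hBm.diff hDm)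
        (fun t ht => ?_)
        (fun C hCm hCB => h1 C hCm (fun t ht => (hBsub (hCB ht).1).1))
      obtain ⟨htB, htD⟩ := ht
      obtain ⟨-, -, -, hc⟩ := hBsub htB
      have : u t 0 ≠ u t 1 := htD
      show (0:ℝ) < u t 0 - u t 1
      cases lt_or_eq_of_le hc with
      | inl hlt => linarith
      | inr heq => exact absurd heq.symm this
    have hdiag : (m 0).measure (B ∩ D) ≤ (mbar 0).measure (B ∩ D) := by
      have hBDm : MeasurableSet (B ∩ D) := hBm.inter hDm
      rw [hBDm.measure_eq_iSup_isCompact]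
      refine iSup_le fun K => iSup_le fun hKU => iSup_le fun hKc => ?_
      have hKm : MeasurableSet K := hKc.isClosed.measurableSet
      have heqpt : ∀ t ∈ K, (sfAdd (m 0) (mbar 1)) t = (sfAdd (m 1) (mbar 0)) t := by
        intro t htK
        have h01 : u t 0 = u t 1 := (hKU htK).2
        have e0 := hdecomp t 0
        have e1 := hdecomp t 1
        show m 0 t + mbar 1 t = m 1 t + mbar 0 t
        linarith
      have heq : (m 0).measure K + (mbar 1).measure K
          = (m 1).measure K + (mbar 0).measure K := by
        have := stieltjes_eq_on_compact (sfAdd (m 0) (mbar 1)) (sfAdd (m 1) (mbar 0))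
          (sfAdd_continuous (hmc 0) (hmbarc 1)) (sfAdd_continuous (hmc 1) (hmbarc 0))
          K hKc heqpt
        rwa [sfAdd_measure, sfAdd_measure, Measure.add_apply, Measure.add_apply] at this
      have hN : (m 1).measure K ≤ (mbar 1).measure K := by
        refine north K hKm (fun t htK => ?_)
        obtain ⟨htB, htD⟩ := hKU htK
        obtain ⟨hti, ha, hb, hc⟩ := hBsub htB
        have h01 : u t 0 = u t 1 := htD
        exact ⟨hti, by linarith, by linarith, le_of_eq h01⟩
      have hfin : (mbar 1).measure K ≠ ⊤ := hKc.measure_lt_top.ne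
      have hchain : (m 0).measure K + (mbar 1).measure K
          ≤ (mbar 0).measure K + (mbar 1).measure K := by
        rw [heq]
        calc (m 1).measure K + (mbar 0).measure K
            ≤ (mbar 1).measure K + (mbar 0).measure K := add_le_add_left hN _
          _ = (mbar 0).measure K + (mbar 1).measure K := add_comm _ _
      have hK0 : (m 0).measure K ≤ (mbar 0).measure K :=
        (ENNReal.add_le_add_iff_right hfin).1 hchain
      exact hK0.trans (measure_mono hKU)
    calc (m 0).measure B = (m 0).measure (B \ D) + (m 0).measure (B ∩ D) := by
          rw [← measure_union hdisj (hBm.inter hDm), hBeq]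
      _ ≤ (mbar 0).measure (B \ D) + (mbar 0).measure (B ∩ D) := add_le_add hplus hdiag
      _ = (mbar 0).measure B := by rw [← measure_union hdisj (hBm.inter hDm), hBeq]
  -- South pointwise
  · rintro t ht ⟨ha, hb, hc⟩
    have habs : |u t 0| ≤ -u t 1 := abs_le.2 ⟨by linarith, hc⟩
    rw [hv t, abs_of_neg ha, max_eq_right habs]
  -- South measure
  · intro B hBm hBsub
    set D : Set ℝ := {t | u t 0 = -u t 1} with hD
    have hDm : MeasurableSet D :=
      measurableSet_eq_fun hu0c.measurable hu1c.measurable.neg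
    have hBeq : (B \ D) ∪ (B ∩ D) = B := diff_union_inter B D
    have hdisj : Disjoint (B \ D) (B ∩ D) :=
      disjoint_sdiff_self_left.mono_right inter_subset_right
    have hminus : (mbar 1).measure (B \ D) ≤ (m 1).measure (B \ D) := by
      refine layer_le _ _ (fun t => -(u t 0 + u t 1)) ((hu0c.add hu1c).neg) _ (hBm.diff hDm)
        (fun t ht => ?_) (fun C hCm hCB => ?_)
      · obtain ⟨htB, htD⟩ := ht
        obtain ⟨-, -, -, hc⟩ := hBsub htB
        have : u t 0 ≠ -u t 1 := htD
        show (0:ℝ) < -(u t 0 + u t 1)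
        cases lt_or_eq_of_le hc with
        | inl hlt => linarith
        | inr heq => exact absurd heq.symm this.symm
      · have := h2 C hCm (fun t ht => (hBsub (hCB ht).1).1)
        rw [integral_neg, integral_neg]
        exact neg_le_neg this
    have hdiag : (mbar 1).measure (B ∩ D) ≤ (m 1).measure (B ∩ D) := by
      have hBDm : MeasurableSet (B ∩ D) := hBm.inter hDm
      rw [hBDm.measure_eq_iSup_isCompact]
      refine iSup_le fun K => iSup_le fun hKU => iSup_le fun hKc => ?_
      have hKm : MeasurableSet K := hKc.isClosed.measurableSet
      have heqpt : ∀ t ∈ K, (sfAdd (m 0) (m 1)) t = (sfAdd (mbar 0) (mbar 1)) t := by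
        intro t htK
        have h01 : u t 0 = -u t 1 := (hKU htK).2
        have e0 := hdecomp t 0
        have e1 := hdecomp t 1
        show m 0 t + m 1 t = mbar 0 t + mbar 1 t
        linarith
      have heq : (m 0).measure K + (m 1).measure K
          = (mbar 0).measure K + (mbar 1).measure K := by
        have := stieltjes_eq_on_compact (sfAdd (m 0) (m 1)) (sfAdd (mbar 0) (mbar 1))
          (sfAdd_continuous (hmc 0) (hmc 1)) (sfAdd_continuous (hmbarc 0) (hmbarc 1))
          K hKc heqpt
        rwa [sfAdd_measure, sfAdd_measure, Measure.add_apply, Measure.add_apply] at this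
      have hW : (m 0).measure K ≤ (mbar 0).measure K := by
        refine layer_le _ _ (fun t => u t 0 - u t 1) (hu0c.sub hu1c) K hKm (fun t htK => ?_)
          (fun C hCm hCK => h1 C hCm (fun t ht => (hBsub (hKU (hCK ht)).1).1))
        obtain ⟨htB, htD⟩ := hKU htK
        obtain ⟨-, ha, -, -⟩ := hBsub htB
        have h01 : u t 0 = -u t 1 := htD
        show (0:ℝ) < u t 0 - u t 1
        linarith
      have hfin : (m 0).measure K ≠ ⊤ := hKc.measure_lt_top.ne
      have hchain : (m 0).measure K + (mbar 1).measure K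
          ≤ (m 0).measure K + (m 1).measure K := by
        calc (m 0).measure K + (mbar 1).measure K
            ≤ (mbar 0).measure K + (mbar 1).measure K := add_le_add_left hW _
          _ = (m 0).measure K + (m 1).measure K := heq.symm
      have hK1 : (mbar 1).measure K ≤ (m 1).measure K :=
        (ENNReal.add_le_add_iff_left hfin).1 hchain
      exact hK1.trans (measure_mono hKU)
    calc (mbar 1).measure B = (mbar 1).measure (B \ D) + (mbar 1).measure (B ∩ D) := by
          rw [← measure_union hdisj (hBm.inter hDm), hBeq]
      _ ≤ (m 1).measure (B \ D) + (m 1).measure (B ∩ D) := add_le_add hminus hdiag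
      _ = (m 1).measure B := by rw [← measure_union hdisj (hBm.inter hDm), hBeq]
  -- West pointwise
  · rintro t ht ⟨ha, hb, hc⟩
    have habs : |u t 1| ≤ -u t 0 := abs_le.2 ⟨by linarith, hc⟩
    rw [hv t, abs_of_neg ha, max_eq_left habs]
  -- West measure
  · intro B hBm hBsub
    refine layer_le _ _ (fun t => -(u t 0 - u t 1)) ((hu0c.sub hu1c).neg) B hBm
      (fun t ht => ?_) (fun C hCm hCB => ?_)
    · obtain ⟨-, -, hb, -⟩ := hBsub ht
      show (0:ℝ) < -(u t 0 - u t 1)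
      linarith
    · have := h1 C hCm (fun t ht => (hBsub (hCB ht)).1)
      rw [integral_neg, integral_neg]
      exact neg_le_neg this
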